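/- arXiv:0805.1292 — 3 statements merged into one kernel-verified Lean document; each statement's English description precedes it below -/
import Mathlib

section
/- Let G = ([n], E) be a simple graph, let q_{i,j} ≥ 2 (for i < j) be pairwise coprime integers, and a_i := ∏_{ℓ≠i} q_{{i,ℓ}}. Then there exist integers α₁,…,α_n such that for all i ≠ j: α_i ≡ α_j (mod gcd(a_i,a_j)) if and only if {i,j} ∈ E. -/
lemma crt2 {m n a b : ℤ} (h : IsCoprime m n) :
    ∃ x, x ≡ a [ZMOD m] ∧ x ≡ b [ZMOD n] := by
  obtain ⟨u, v, huv⟩ := h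
  refine ⟨b*(u*m) + a*(v*n), ?_, ?_⟩
  · rw [Int.modEq_iff_dvd]
    exact ⟨a*u - b*u, by linear_combination (-a)*huv⟩
  · rw [Int.modEq_iff_dvd]
    exact ⟨b*v - a*v, by linear_combination (-b)*huv⟩

lemma crtFin {ι : Type*} [DecidableEq ι] (s : Finset ι) (m r : ι → ℤ)
    (h : ∀ i ∈ s, ∀ j ∈ s, i ≠ j → IsCoprime (m i) (m j)) :
    ∃ x, ∀ i ∈ s, x ≡ r i [ZMOD m i] := by
  induction s using Finset.induction_on with
  | empty => exact ⟨0, by simp⟩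
  | @insert c s hnot ih =>
    obtain ⟨x, hx⟩ := ih (fun i hi j hj hij =>
      h i (Finset.mem_insert_of_mem hi) j (Finset.mem_insert_of_mem hj) hij)
    have hco : IsCoprime (m c) (∏ i ∈ s, m i) :=
      IsCoprime.prod_right fun i hi =>
        h c (Finset.mem_insert_self c s) i (Finset.mem_insert_of_mem hi)
          (fun hci => hnot (hci ▸ hi))
    obtain ⟨y, hy1, hy2⟩ := crt2 (a := r c) (b := x) hco
    refine ⟨y, fun i hi => ?_⟩
    rcases Finset.mem_insert.1 hi with rfl | hi
    · exact hy1
    · exact ((hy2.of_dvd (Finset.dvd_prod_of_mem m hi)).trans (hx i hi))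

/-- Given a simple graph G on [n], pairwise coprime q_{i,j} ≥ 2 (symmetric in
i,j) and a_i := ∏_{ℓ ≠ i} q_{i,ℓ}, there exist integers α₁,…,α_n such that
for all i ≠ j: α_i ≡ α_j (mod gcd(a_i,a_j)) iff {i,j} ∈ E. -/
theorem stmt8 (n : ℕ) (G : SimpleGraph (Fin n)) (q : Fin n → Fin n → ℤ)
    (hsymm : ∀ i j, q i j = q j i)
    (h2 : ∀ i j, i ≠ j → 2 ≤ q i j)
    (hcop : ∀ i j i' j', i ≠ j → i' ≠ j' →
      ({i, j} : Finset (Fin n)) ≠ {i', j'} → IsCoprime (q i j) (q i' j'))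
    (a : Fin n → ℤ) (ha : ∀ i, a i = ∏ ℓ ∈ Finset.univ.erase i, q i ℓ) :
    ∃ α : Fin n → ℤ, ∀ i j, i ≠ j →
      (α i ≡ α j [ZMOD (Int.gcd (a i) (a j) : ℤ)] ↔ G.Adj i j) := by
  classical
  -- pair-coprimality helper: for pairs with distinct underlying 2-sets
  have hpairne : ∀ i j i' j' : Fin n, i ≠ j → i' ≠ j' → i ≠ i' → i ≠ j' →
      ({i, j} : Finset (Fin n)) ≠ {i', j'} := by
    intro i j i' j' _ _ h1 h2 he
    have : i ∈ ({i', j'} : Finset (Fin n)) := he ▸ Finset.mem_insert_self i {j}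
    simp only [Finset.mem_insert, Finset.mem_singleton] at this
    tauto
  -- gcd (a i) (a j) = q i j  for i ≠ j
  have hgcd : ∀ i j : Fin n, i ≠ j → (Int.gcd (a i) (a j) : ℤ) = q i j := by
    intro i j hij
    have hji : j ≠ i := hij.symm
    set b := ∏ ℓ ∈ (Finset.univ.erase i).erase j, q i ℓ with hb
    set c := ∏ ℓ ∈ (Finset.univ.erase j).erase i, q j ℓ with hc
    have hai : a i = q i j * b := by
      rw [ha i, ← Finset.mul_prod_erase _ _ (by simp [hji] : j ∈ Finset.univ.erase i)]
    have haj : a j = q i j * c := by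
      rw [ha j, ← Finset.mul_prod_erase _ _ (by simp [hij] : i ∈ Finset.univ.erase j),
        hsymm]
    have hbc : IsCoprime b c := by
      apply IsCoprime.prod_left
      intro ℓ hℓ
      apply IsCoprime.prod_right
      intro m hm
      simp only [Finset.mem_erase, Finset.mem_univ, and_true] at hℓ hm
      exact hcop i ℓ j m (fun h => hℓ.2 h.symm) (fun h => hm.2 h.symm)
        (hpairne i ℓ j m (fun h => hℓ.2 h.symm) (fun h => hm.2 h.symm) hij
          (fun h => hm.1 h.symm))
    have hq : (0:ℤ) ≤ q i j := le_trans (by norm_num) (h2 i j hij)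
    rw [hai, haj, Int.gcd_mul_left, Int.isCoprime_iff_gcd_eq_one.1 hbc, mul_one,
      Int.natAbs_of_nonneg hq]
  -- CRT construction of α
  set S : Finset (Fin n × Fin n) := Finset.univ.filter (fun p => p.1 < p.2) with hS
  have hScop : ∀ p ∈ S, ∀ p' ∈ S, p ≠ p' → IsCoprime (q p.1 p.2) (q p'.1 p'.2) := by
    intro p hp p' hp' hne
    simp only [hS, Finset.mem_filter, Finset.mem_univ, true_and] at hp hp'
    apply hcop _ _ _ _ hp.ne hp'.ne
    intro he
    apply hne
    have h1 : p.1 ∈ ({p'.1, p'.2} : Finset (Fin n)) := he ▸ Finset.mem_insert_self _ _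
    have h2 : p.2 ∈ ({p'.1, p'.2} : Finset (Fin n)) := by
      rw [← he]; simp
    simp only [Finset.mem_insert, Finset.mem_singleton] at h1 h2
    have := hp; have := hp'
    rcases h1 with e1 | e1 <;> rcases h2 with e2 | e2
    · exact absurd (e2 ▸ e1 ▸ hp) (lt_irrefl _)
    · exact Prod.ext e1 e2
    · exact absurd (e1 ▸ hp) (lt_asymm (e2 ▸ hp'))
    · exact absurd (e2 ▸ e1 ▸ hp) (lt_irrefl _)
  have hα : ∀ k : Fin n, ∃ x : ℤ, ∀ p ∈ S,
      x ≡ (if k = p.2 ∧ ¬ G.Adj p.1 p.2 then 1 else 0) [ZMOD q p.1 p.2] := by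
    intro k
    obtain ⟨x, hx⟩ := crtFin S (fun p => q p.1 p.2)
      (fun p => if k = p.2 ∧ ¬ G.Adj p.1 p.2 then 1 else 0) hScop
    exact ⟨x, hx⟩
  choose α hαspec using hα
  refine ⟨α, ?_⟩
  -- key: for i < j
  have key : ∀ i j : Fin n, i < j → (α i ≡ α j [ZMOD q i j] ↔ G.Adj i j) := by
    intro i j hij
    have hmem : (i, j) ∈ S := by simp [hS, hij]
    have hi := hαspec i (i, j) hmem
    have hj := hαspec j (i, j) hmem
    simp only [hij.ne, false_and, if_false] at hi
    simp only [true_and] at hj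
    constructor
    · intro h
      by_contra hadj
      simp only [hadj, not_false_iff, if_true] at hj
      have : (0:ℤ) ≡ 1 [ZMOD q i j] := (hi.symm.trans h).trans hj
      have hdvd : q i j ∣ 1 := by
        have := Int.ModEq.dvd this
        simpa using this
      have := Int.le_of_dvd one_pos hdvd
      linarith [h2 i j hij.ne]
    · intro hadj
      simp only [hadj, not_true, and_false, if_false] at hj
      exact hi.trans hj.symm
  intro i j hij
  rcases lt_or_gt_of_ne hij with h | h
  · rw [hgcd i j hij]; exact key i j h
  · rw [hgcd i j hij, hsymm]
    constructor
    · intro hm; exact ((key j i h).1 hm.symm).symm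
    · intro hadj; exact ((key j i h).2 hadj.symm).symm
end

section
/- With the construction of the previous context, a subset S ⊆ [n] of the arithmetic progressions P_{a_i,α_i} (i ∈ S) has nonempty common intersection if and only if S is a clique in G. Hence cliques of G of size k correspond exactly to sub-collections of k pairwise-intersecting progressions with a common point. -/
def intProg (a α : ℤ) : Set ℤ := {x | ∃ z : ℤ, x = α + a * z}

lemma mem_intProg {a α x : ℤ} : x ∈ intProg a α ↔ a ∣ x - α := by
  constructor
  · rintro ⟨z, rfl⟩; simp
  · rintro ⟨z, h⟩; exact ⟨z, by linarith⟩

/-- With pairwise coprime symmetric q_{i,j} ≥ 2, a_i := ∏_{ℓ≠i} q_{i,ℓ} and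
integers α_i satisfying α_i ≡ α_j (mod gcd(a_i,a_j)) iff {i,j} ∈ E, a subset
S of the progressions P_{a_i,α_i} has a common point iff S is a clique in G. -/
theorem stmt9 (n : ℕ) (G : SimpleGraph (Fin n)) (q : Fin n → Fin n → ℤ)
    (hsymm : ∀ i j, q i j = q j i)
    (h2 : ∀ i j, i ≠ j → 2 ≤ q i j)
    (hcop : ∀ i j i' j', i ≠ j → i' ≠ j' →
      ({i, j} : Finset (Fin n)) ≠ {i', j'} → IsCoprime (q i j) (q i' j'))
    (a : Fin n → ℤ) (ha : ∀ i, a i = ∏ ℓ ∈ Finset.univ.erase i, q i ℓ)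
    (α : Fin n → ℤ)
    (hα : ∀ i j, i ≠ j →
      (α i ≡ α j [ZMOD (Int.gcd (a i) (a j) : ℤ)] ↔ G.Adj i j))
    (S : Finset (Fin n)) :
    (∃ x : ℤ, ∀ i ∈ S, x ∈ intProg (a i) (α i)) ↔ G.IsClique ↑S := by
  classical
  have hqa : ∀ i j : Fin n, i ≠ j → q i j ∣ a i := by
    intro i j hij
    rw [ha]
    exact Finset.dvd_prod_of_mem _ (Finset.mem_erase.mpr ⟨hij.symm, Finset.mem_univ j⟩)
  -- q i j divides α j - α i whenever i and j are adjacent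
  have hqd : ∀ i j : Fin n, i ≠ j → G.Adj i j → q i j ∣ α j - α i := by
    intro i j hij hadj
    have hg : (Int.gcd (a i) (a j) : ℤ) ∣ α j - α i :=
      Int.ModEq.dvd ((hα i j hij).mpr hadj)
    have hq : q i j ∣ (Int.gcd (a i) (a j) : ℤ) :=
      Int.dvd_coe_gcd (hqa i j hij) (by rw [hsymm]; exact hqa j i hij.symm)
    exact hq.trans hg
  constructor
  · rintro ⟨x, hx⟩ i hi j hj hij
    obtain ⟨zi, hzi⟩ := hx i hi
    obtain ⟨zj, hzj⟩ := hx j hj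
    refine (hα i j hij).mp (Int.modEq_iff_dvd.mpr ?_)
    have : α j - α i = a i * zi - a j * zj := by linarith
    rw [this]
    exact dvd_sub ((Int.gcd_dvd_left _ _).mul_right zi) ((Int.gcd_dvd_right _ _).mul_right zj)
  · intro hS
    induction S using Finset.induction_on with
    | empty => exact ⟨0, by simp⟩
    | @insert j s hjs ih =>
      obtain ⟨x, hx⟩ := ih (hS.subset (by exact_mod_cast Finset.subset_insert j s))
      have hne : ∀ i ∈ s, i ≠ j := fun i hi h => hjs (h ▸ hi)
      have hadj : ∀ i ∈ s, G.Adj i j := fun i hi =>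
        hS (by simp [hi]) (by simp) (hne i hi)
      -- q i j divides α j - x for each i ∈ s
      have hdvd : ∀ i ∈ s, q i j ∣ α j - x := by
        intro i hi
        have h1 : q i j ∣ α j - α i := hqd i j (hne i hi) (hadj i hi)
        have h2 : q i j ∣ α i - x := by
          obtain ⟨z, hz⟩ := hx i hi
          exact (hqa i j (hne i hi)).trans ⟨-z, by linarith⟩
        have : α j - x = (α j - α i) + (α i - x) := by ring
        rw [this]; exact dvd_add h1 h2
      set P : ℤ := ∏ i ∈ s, q i j with hPdef
      have hP : P ∣ α j - x := by
        refine Finset.prod_dvd_of_coprime ?_ hdvd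
        intro i hi i' hi' hii'
        refine hcop i j i' j (hne i hi) (hne i' hi') ?_
        intro h
        have : i ∈ ({i', j} : Finset (Fin n)) := h ▸ (by simp)
        simp only [Finset.mem_insert, Finset.mem_singleton] at this
        rcases this with h' | h'
        · exact hii' h'
        · exact hne i hi h'
      set L : ℤ := ∏ i ∈ s, a i with hLdef
      set L' : ℤ := ∏ i ∈ s, ∏ ℓ ∈ (Finset.univ.erase i).erase j, q i ℓ with hL'def
      have hL : L = P * L' := by
        rw [hLdef, hPdef, hL'def, ← Finset.prod_mul_distrib]
        refine Finset.prod_congr rfl fun i hi => ?_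
        rw [ha i]
        exact (Finset.mul_prod_erase _ _
          (Finset.mem_erase.mpr ⟨(hne i hi).symm, Finset.mem_univ j⟩)).symm
      set A' : ℤ := ∏ ℓ ∈ Finset.univ.erase j \ s, q j ℓ with hA'def
      have hsub : s ⊆ Finset.univ.erase j := fun i hi =>
        Finset.mem_erase.mpr ⟨hne i hi, Finset.mem_univ i⟩
      have haj : a j = A' * P := by
        rw [ha j, hA'def, hPdef, ← Finset.prod_sdiff hsub]
        congr 1
        exact Finset.prod_congr rfl fun i _ => hsymm j i
      have hcopLA : IsCoprime L' A' := by
        rw [hL'def]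
        refine IsCoprime.prod_left fun i hi => ?_
        refine IsCoprime.prod_left fun ℓ hℓ => ?_
        rw [hA'def]
        refine IsCoprime.prod_right fun m hm => ?_
        simp only [Finset.mem_erase, Finset.mem_sdiff, Finset.mem_univ, and_true] at hℓ hm
        refine hcop i ℓ j m (fun h => hℓ.2 h.symm) (fun h => hm.1 h.symm) ?_
        intro h
        have : j ∈ ({i, ℓ} : Finset (Fin n)) := h ▸ (by simp)
        simp only [Finset.mem_insert, Finset.mem_singleton] at this
        rcases this with h' | h'
        · exact hne i hi h'.symm
        · exact hℓ.1 h'.symm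
      obtain ⟨u, v, huv⟩ := hcopLA
      obtain ⟨k, hk⟩ := hP
      refine ⟨x + L * (k * u), fun i hi => ?_⟩
      rcases Finset.mem_insert.mp hi with rfl | hi
      · rw [mem_intProg]
        refine ⟨-(v * k), ?_⟩
        have : x + L * (k * u) - α i = P * L' * (k * u) - P * k := by
          rw [← hL]; linarith
        rw [this, haj]
        linear_combination (P * k) * huv
      · rw [mem_intProg]
        obtain ⟨z, hz⟩ := hx i hi
        have h1 : a i ∣ L := Finset.dvd_prod_of_mem _ hi
        have h2 : a i ∣ x - α i := ⟨z, by linarith⟩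
        have : x + L * (k * u) - α i = (x - α i) + L * (k * u) := by ring
        rw [this]
        exact dvd_add h2 (h1.mul_right _)
end

section
/- The k-fold intersection problem for integer arithmetic progressions reduces to cliques: for every simple graph G on n vertices and every k ≤ n, G has a clique of size k if and only if the instance (a_i, α_i)_{i=1..n} constructed from G (via pairwise coprime moduli and CRT) has k progressions with nonempty common intersection. In particular the maximum clique size of G equals the maximum number of the constructed progressions with a common point. -/
lemma solve_cong (c P w : ℤ) (h : GCDMonoid.gcd c P ∣ w) : ∃ t, c ∣ w + P * t := by
  obtain ⟨m, hm⟩ := h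
  refine ⟨-(Int.gcdB c P * m), Int.gcdA c P * m, ?_⟩
  rw [hm, ← Int.coe_gcd, Int.gcd_eq_gcd_ab]
  ring

lemma gcd_prod_dvd {ι : Type*} (c : ℤ) (S : Finset ι) (f : ι → ℤ) :
    GCDMonoid.gcd c (∏ j ∈ S, f j) ∣ ∏ j ∈ S, GCDMonoid.gcd c (f j) := by
  classical
  induction S using Finset.induction_on with
  | empty => simp [gcd_dvd_right c 1]
  | @insert i S hiS ih =>
    rw [Finset.prod_insert hiS, Finset.prod_insert hiS]
    exact (gcd_mul_dvd_mul_gcd c (f i) _).trans (mul_dvd_mul_left _ ih)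

lemma crt_aux {ι : Type*} [DecidableEq ι] (a α : ι → ℤ) (S : Finset ι) :
    (∀ i ∈ S, ∀ j ∈ S, ∀ j' ∈ S, j ≠ j' → i ≠ j → i ≠ j' →
      IsCoprime ((Int.gcd (a i) (a j) : ℤ)) ((Int.gcd (a i) (a j') : ℤ))) →
    (∀ i ∈ S, ∀ j ∈ S, i ≠ j → (Int.gcd (a i) (a j) : ℤ) ∣ α i - α j) →
    ∃ x, ∀ i ∈ S, a i ∣ x - α i := by
  induction S using Finset.induction_on with
  | empty => exact fun _ _ => ⟨0, by simp⟩
  | @insert i S hiS ih =>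
    intro hco hdvd
    obtain ⟨x, hx⟩ := ih
      (fun i hi j hj j' hj' => hco i (Finset.mem_insert_of_mem hi) j
        (Finset.mem_insert_of_mem hj) j' (Finset.mem_insert_of_mem hj'))
      (fun i hi j hj => hdvd i (Finset.mem_insert_of_mem hi) j
        (Finset.mem_insert_of_mem hj))
    set P : ℤ := ∏ j ∈ S, a j with hP
    have hne : ∀ j ∈ S, i ≠ j := fun j hj h => hiS (h ▸ hj)
    -- each gcd (a i) (a j) divides x - α i
    have hdiv : ∀ j ∈ S, (Int.gcd (a i) (a j) : ℤ) ∣ x - α i := by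
      intro j hj
      have h1 : (Int.gcd (a i) (a j) : ℤ) ∣ x - α j :=
        dvd_trans (Int.gcd_dvd_right _ _) (hx j hj)
      have h2 : (Int.gcd (a i) (a j) : ℤ) ∣ α i - α j :=
        hdvd i (Finset.mem_insert_self i S) j (Finset.mem_insert_of_mem hj)
          (hne j hj)
      have := dvd_sub h1 h2
      simpa using this
    have hprod : (∏ j ∈ S, (Int.gcd (a i) (a j) : ℤ)) ∣ x - α i := by
      refine Finset.prod_dvd_of_coprime ?_ hdiv
      intro j hj j' hj' hjj'
      exact hco i (Finset.mem_insert_self i S) j (Finset.mem_insert_of_mem hj)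
        j' (Finset.mem_insert_of_mem hj') hjj' (hne j hj) (hne j' hj')
    have hg : GCDMonoid.gcd (a i) P ∣ x - α i := by
      refine dvd_trans ((gcd_prod_dvd (a i) S a).trans ?_) hprod
      refine dvd_of_eq (Finset.prod_congr rfl fun j _ => ?_)
      rw [← Int.coe_gcd]
    obtain ⟨t, ht⟩ := solve_cong (a i) P (α i - x) (by
      have := hg.neg_right
      simpa using this)
    refine ⟨x - P * t, ?_⟩
    intro j hj
    rcases Finset.mem_insert.1 hj with rfl | hjS
    · have h' := ht.neg_right
      have he : -((α j - x) + P * t) = (x - P * t) - α j := by ring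
      rwa [he] at h'
    · have h1 : a j ∣ x - α j := hx j hjS
      have h2 : a j ∣ P := Finset.dvd_prod_of_mem a hjS
      have : (x - P * t) - α j = (x - α j) - (P * t) := by ring
      rw [this]
      exact dvd_sub h1 (h2.mul_right t)

/-- Reduction from Clique: for a simple graph G on n vertices, pairwise coprime
symmetric q_{i,j} ≥ 2, a_i := ∏_{ℓ≠i} q_{i,ℓ} and α_i chosen (by CRT) with
α_i ≡ α_j (mod gcd(a_i,a_j)) iff {i,j} ∈ E, G has a clique of size k iff k of
the progressions P_{a_i,α_i} have a common point; in particular, the maximum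
clique size equals the maximum number of progressions with a common point. -/
theorem stmt17 (n : ℕ) (G : SimpleGraph (Fin n)) (q : Fin n → Fin n → ℤ)
    (hsymm : ∀ i j, q i j = q j i)
    (h2 : ∀ i j, i ≠ j → 2 ≤ q i j)
    (hcop : ∀ i j i' j', i ≠ j → i' ≠ j' →
      ({i, j} : Finset (Fin n)) ≠ {i', j'} → IsCoprime (q i j) (q i' j'))
    (a : Fin n → ℤ) (ha : ∀ i, a i = ∏ ℓ ∈ Finset.univ.erase i, q i ℓ)
    (α : Fin n → ℤ)
    (hα : ∀ i j, i ≠ j →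
      (α i ≡ α j [ZMOD (Int.gcd (a i) (a j) : ℤ)] ↔ G.Adj i j)) :
    ∀ k ≤ n,
      ((∃ S : Finset (Fin n), S.card = k ∧ G.IsClique ↑S) ↔
        (∃ S : Finset (Fin n), S.card = k ∧
          ∃ x : ℤ, ∀ i ∈ S, x ∈ intProg (a i) (α i))) := by
  classical
  -- q i j divides a i
  have hqa : ∀ i j : Fin n, i ≠ j → q i j ∣ a i := by
    intro i j hij
    rw [ha i]
    exact Finset.dvd_prod_of_mem _ (Finset.mem_erase.2 ⟨hij.symm, Finset.mem_univ j⟩)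
  -- gcd (a i) (a j) = q i j
  have hgcd : ∀ i j : Fin n, i ≠ j → (Int.gcd (a i) (a j) : ℤ) = q i j := by
    intro i j hij
    have hq_dvd : q i j ∣ (Int.gcd (a i) (a j) : ℤ) := by
      refine Int.dvd_coe_gcd (hqa i j hij) ?_
      rw [hsymm i j]
      exact hqa j i hij.symm
    have hg_dvd : (Int.gcd (a i) (a j) : ℤ) ∣ q i j := by
      set A : ℤ := ∏ ℓ ∈ (Finset.univ.erase i).erase j, q i ℓ with hA
      have hai : a i = q i j * A := by
        rw [ha i, hA, ← Finset.prod_erase_mul _ _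
          (Finset.mem_erase.2 ⟨hij.symm, Finset.mem_univ j⟩)]
        ring
      have hcopA : IsCoprime A (a j) := by
        rw [ha j, hA]
        refine IsCoprime.prod_left fun ℓ hℓ => IsCoprime.prod_right fun m hm => ?_
        obtain ⟨hℓj, hℓi, _⟩ :
            ℓ ≠ j ∧ ℓ ≠ i ∧ True := by
          simp only [Finset.mem_erase] at hℓ
          exact ⟨hℓ.1, hℓ.2.1, trivial⟩
        have hmj : m ≠ j := (Finset.mem_erase.1 hm).1
        refine hcop i ℓ j m hℓi.symm hmj.symm ?_
        intro hEq
        have : j ∈ ({i, ℓ} : Finset (Fin n)) := by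
          rw [hEq]; exact Finset.mem_insert_self j {m}
        rcases Finset.mem_insert.1 this with h | h
        · exact hij h.symm
        · exact hℓj (Finset.mem_singleton.1 h).symm
      have hg1 : (Int.gcd (a i) (a j) : ℤ) ∣ q i j * A := by
        rw [← hai]; exact Int.gcd_dvd_left _ _
      have hgj : (Int.gcd (a i) (a j) : ℤ) ∣ a j := Int.gcd_dvd_right _ _
      have hcopg : IsCoprime ((Int.gcd (a i) (a j) : ℤ)) A :=
        (hcopA.of_isCoprime_of_dvd_right hgj).symm
      exact hcopg.dvd_of_dvd_mul_right hg1
    refine Int.dvd_antisymm (Int.natCast_nonneg _) (by linarith [h2 i j hij]) hg_dvd hq_dvd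
  -- adjacency ↔ divisibility
  have hadj : ∀ i j : Fin n, i ≠ j → (G.Adj i j ↔ q i j ∣ α i - α j) := by
    intro i j hij
    rw [← hα i j hij, Int.modEq_iff_dvd, hgcd i j hij, dvd_sub_comm]
  -- coprimality of the gcds
  have hcog : ∀ i j j' : Fin n, i ≠ j → i ≠ j' → j ≠ j' →
      IsCoprime (q i j) (q i j') := by
    intro i j j' hij hij' hjj'
    refine hcop i j i j' hij hij' ?_
    intro hEq
    have : j' ∈ ({i, j} : Finset (Fin n)) := by
      rw [hEq]; exact Finset.mem_insert_of_mem (Finset.mem_singleton_self j')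
    rcases Finset.mem_insert.1 this with h | h
    · exact hij' h.symm
    · exact hjj' (Finset.mem_singleton.1 h).symm
  intro k hk
  constructor
  · rintro ⟨S, hcard, hclique⟩
    refine ⟨S, hcard, ?_⟩
    obtain ⟨x, hx⟩ := crt_aux a α S
      (by
        intro i hi j hj j' hj' hjj' hij hij'
        rw [hgcd i j hij, hgcd i j' hij']
        exact hcog i j j' hij hij' hjj')
      (by
        intro i hi j hj hij
        rw [hgcd i j hij]
        exact (hadj i j hij).1 (hclique hi hj hij))
    refine ⟨x, fun i hi => ?_⟩
    obtain ⟨z, hz⟩ := hx i hi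
    exact ⟨z, by linarith [hz]⟩
  · rintro ⟨S, hcard, x, hx⟩
    refine ⟨S, hcard, ?_⟩
    intro i hi j hj hij
    obtain ⟨zi, hzi⟩ := hx i hi
    obtain ⟨zj, hzj⟩ := hx j hj
    have hij' : (i : Fin n) ≠ j := hij
    have hdvd : q i j ∣ α i - α j := by
      have h1 : q i j ∣ x - α i := (hqa i j hij').trans ⟨zi, by linarith⟩
      have h2 : q i j ∣ x - α j := by
        rw [hsymm i j]
        exact (hqa j i hij'.symm).trans ⟨zj, by linarith⟩
      have := dvd_sub h2 h1
      simpa using this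
    exact (hadj i j hij').2 hdvd
end
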